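/- Let n ≥ 7 and let c be a function from the 3-element subsets of {1,...,n} to a set of colors. For any color λ, at least one of the following holds: (1) c⁻¹(λ) contains two disjoint sets; (2) |c⁻¹(λ)| ≤ 3n - 8; (3) there exists x ∈ {1,...,n} contained in every set of c⁻¹(λ). -/

import Mathlib

open Finset
open scoped Classical

lemma pair_other {e : Finset ℕ} (he : e.card = 2) {z : ℕ} (hz : z ∈ e) :
    ∃ w, w ≠ z ∧ e = {z, w} := by
  have h1 : (e.erase z).card = 1 := by rw [card_erase_of_mem hz, he]
  obtain ⟨w, hw⟩ := card_eq_one.mp h1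
  have hwz : w ∈ e.erase z := hw ▸ mem_singleton_self w
  refine ⟨w, (mem_erase.mp hwz).1, ?_⟩
  have hsub : ({z, w} : Finset ℕ) ⊆ e := by
    intro t ht
    rcases mem_insert.mp ht with rfl | ht
    · exact hz
    · exact (mem_erase.mp (hw ▸ ht)).2
  refine (eq_of_subset_of_card_le hsub ?_).symm
  rw [he, card_insert_of_notMem (by simp [(mem_erase.mp hwz).1.symm]), card_singleton]

lemma pair_eq_of_mem {e : Finset ℕ} (he : e.card = 2) {α β : ℕ} (ha : α ∈ e) (hb : β ∈ e)
    (hab : α ≠ β) : e = {α, β} := by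
  obtain ⟨w, hw, rfl⟩ := pair_other he ha
  rcases mem_insert.mp hb with rfl | hb
  · exact absurd rfl hab
  · rw [mem_singleton.mp hb]

lemma triple_other {D : Finset ℕ} (hD : D.card = 3) {a u : ℕ} (ha : a ∈ D) (hu : u ∈ D)
    (hau : a ≠ u) : ∃ z, z ≠ a ∧ z ≠ u ∧ D = {a, u, z} := by
  have hu' : u ∈ D.erase a := mem_erase.mpr ⟨Ne.symm hau, hu⟩
  have h1 : ((D.erase a).erase u).card = 1 := by
    rw [card_erase_of_mem hu', card_erase_of_mem ha, hD]
  obtain ⟨z, hz⟩ := card_eq_one.mp h1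
  have hzm : z ∈ (D.erase a).erase u := hz ▸ mem_singleton_self z
  obtain ⟨hzu, hzmem⟩ := mem_erase.mp hzm
  obtain ⟨hza, hzD⟩ := mem_erase.mp hzmem
  refine ⟨z, hza, hzu, ?_⟩
  have hsub : ({a, u, z} : Finset ℕ) ⊆ D := by
    intro t ht
    rcases mem_insert.mp ht with rfl | ht
    · exact ha
    rcases mem_insert.mp ht with rfl | ht
    · exact hu
    · rw [mem_singleton.mp ht]; exact hzD
  refine (eq_of_subset_of_card_le hsub ?_).symm
  rw [hD, card_insert_of_notMem (by simp [hau, Ne.symm hza]),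
    card_insert_of_notMem (by simp [Ne.symm hzu]), card_singleton]

lemma card_le_of_covered {X : Finset (Finset ℕ)} {T : Finset ℕ} {f : ℕ → Finset ℕ}
    (h : ∀ D ∈ X, ∃ z ∈ T, D = f z) : X.card ≤ T.card := by
  have hsub : X ⊆ T.image f := by
    intro D hD; obtain ⟨z, hz, rfl⟩ := h D hD; exact mem_image_of_mem _ hz
  exact (card_le_card hsub).trans card_image_le

lemma fourCardLe {a b c d : Finset ℕ} : ({a, b, c, d} : Finset (Finset ℕ)).card ≤ 4 := by
  have h1 := card_insert_le a ({b, c, d} : Finset (Finset ℕ))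
  have h2 := card_insert_le b ({c, d} : Finset (Finset ℕ))
  have h3 := card_insert_le c ({d} : Finset (Finset ℕ))
  simp only [card_singleton] at *
  omega

lemma star_bound {X : Finset (Finset ℕ)} {V : Finset ℕ} {u : ℕ} (hu : u ∈ V)
    (h : ∀ e ∈ X, u ∈ e ∧ e.card = 2 ∧ e ⊆ V) : X.card ≤ V.card - 1 := by
  have := card_le_of_covered (X := X) (T := V.erase u) (f := fun t => {u, t}) ?_
  · rwa [card_erase_of_mem hu] at this
  · intro D hD
    obtain ⟨hue, hc, hsV⟩ := h D hD
    obtain ⟨w, hw, rfl⟩ := pair_other hc hue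
    exact ⟨w, mem_erase.mpr ⟨hw, hsV (by simp)⟩, rfl⟩

-- all edges meet {p,q}: X.card + 3 ≤ 2*V.card
lemma meet_edge_bound {X : Finset (Finset ℕ)} {V : Finset ℕ} {p q : ℕ}
    (hp : p ∈ V) (hq : q ∈ V) (hpq : p ≠ q) (hm : 2 ≤ V.card)
    (h : ∀ e ∈ X, (e ∩ ({p, q} : Finset ℕ)).Nonempty ∧ e.card = 2 ∧ e ⊆ V) :
    X.card + 3 ≤ 2 * V.card := by
  set SP := (V.erase p).image (fun t => ({p, t} : Finset ℕ)) with hSP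
  set SQ := (V.erase q).image (fun t => ({q, t} : Finset ℕ)) with hSQ
  have hsub : X ⊆ SP ∪ SQ := by
    intro e he
    obtain ⟨⟨t, ht⟩, hc, hsV⟩ := h e he
    obtain ⟨hte, htpq⟩ := mem_inter.mp ht
    rcases mem_insert.mp htpq with rfl | htq
    · obtain ⟨w, hw, rfl⟩ := pair_other hc hte
      exact mem_union_left _ (mem_image.mpr ⟨w, mem_erase.mpr ⟨hw, hsV (by simp)⟩, rfl⟩)
    · rw [mem_singleton.mp htq] at hte
      obtain ⟨w, hw, rfl⟩ := pair_other hc hte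
      exact mem_union_right _ (mem_image.mpr ⟨w, mem_erase.mpr ⟨hw, hsV (by simp)⟩, rfl⟩)
  have hPQ : ({p, q} : Finset ℕ) ∈ SP ∩ SQ := by
    refine mem_inter.mpr ⟨mem_image.mpr ⟨q, mem_erase.mpr ⟨hpq.symm, hq⟩, rfl⟩,
      mem_image.mpr ⟨p, mem_erase.mpr ⟨hpq, hp⟩, ?_⟩⟩
    exact (pair_comm p q).symm
  have h1 : SP.card ≤ V.card - 1 := by
    calc SP.card ≤ (V.erase p).card := card_image_le
    _ = V.card - 1 := card_erase_of_mem hp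
  have h2 : SQ.card ≤ V.card - 1 := by
    calc SQ.card ≤ (V.erase q).card := card_image_le
    _ = V.card - 1 := card_erase_of_mem hq
  have h3 : (SP ∪ SQ).card + (SP ∩ SQ).card = SP.card + SQ.card :=
    card_union_add_card_inter _ _
  have h4 : 1 ≤ (SP ∩ SQ).card := card_pos.mpr ⟨_, hPQ⟩
  have h5 : X.card ≤ (SP ∪ SQ).card := card_le_card hsub
  omega

-- e meets {u,p} and {u,q}: u ∈ e or e = {p,q}
lemma pairs_pierce {e : Finset ℕ} (hc : e.card = 2) {u p q : ℕ} (hpq : p ≠ q)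
    (h1 : (e ∩ ({u, p} : Finset ℕ)).Nonempty) (h2 : (e ∩ ({u, q} : Finset ℕ)).Nonempty) :
    u ∈ e ∨ e = {p, q} := by
  by_cases hu : u ∈ e
  · exact Or.inl hu
  right
  obtain ⟨s, hs⟩ := h1
  obtain ⟨hse, hspq⟩ := mem_inter.mp hs
  have hsp : s = p := by
    rcases mem_insert.mp hspq with rfl | h
    · exact absurd hse hu
    · exact mem_singleton.mp h
  obtain ⟨t, ht⟩ := h2
  obtain ⟨hte, htq'⟩ := mem_inter.mp ht
  have htq : t = q := by
    rcases mem_insert.mp htq' with rfl | h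
    · exact absurd hte hu
    · exact mem_singleton.mp h
  subst hsp htq
  exact pair_eq_of_mem hc hse hte hpq

-- e meets the three edges of a triangle u v w: e is a triangle edge
lemma triangle_capture {e : Finset ℕ} (hc : e.card = 2) {u v w : ℕ}
    (huv : u ≠ v) (huw : u ≠ w) (hvw : v ≠ w)
    (h1 : (e ∩ ({u, v} : Finset ℕ)).Nonempty) (h2 : (e ∩ ({v, w} : Finset ℕ)).Nonempty)
    (h3 : (e ∩ ({u, w} : Finset ℕ)).Nonempty) :
    e ∈ ({({u,v} : Finset ℕ), {v,w}, {u,w}} : Finset (Finset ℕ)) := by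
  by_cases hu : u ∈ e
  · obtain ⟨d, hd, rfl⟩ := pair_other hc hu
    obtain ⟨s, hs⟩ := h2
    obtain ⟨hse, hsvw⟩ := mem_inter.mp hs
    have hsd : s = d := by
      rcases mem_insert.mp hse with rfl | h
      · rcases mem_insert.mp hsvw with rfl | h'
        · exact absurd rfl huv
        · exact absurd (mem_singleton.mp h') huw
      · exact mem_singleton.mp h
    subst hsd
    rcases mem_insert.mp hsvw with rfl | h'
    · simp
    · rw [mem_singleton.mp h']; simp
  · obtain ⟨s, hs⟩ := h1
    obtain ⟨hse, hsuv⟩ := mem_inter.mp hs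
    have hsv : s = v := by
      rcases mem_insert.mp hsuv with rfl | h
      · exact absurd hse hu
      · exact mem_singleton.mp h
    subst hsv
    obtain ⟨t, ht⟩ := h3
    obtain ⟨hte, htuw⟩ := mem_inter.mp ht
    have htw : t = w := by
      rcases mem_insert.mp htuw with rfl | h
      · exact absurd hte hu
      · exact mem_singleton.mp h
    subst htw
    simp [pair_eq_of_mem hc hse hte hvw]

lemma twoCardLe {a b : Finset ℕ} : ({a, b} : Finset (Finset ℕ)).card ≤ 2 := by
  have h1 := card_insert_le a ({b} : Finset (Finset ℕ))
  simp only [card_singleton] at h1; omega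

lemma threeCardLe {a b c : Finset ℕ} : ({a, b, c} : Finset (Finset ℕ)).card ≤ 3 := by
  have h1 := card_insert_le a ({b, c} : Finset (Finset ℕ))
  have h2 := card_insert_le b ({c} : Finset (Finset ℕ))
  simp only [card_singleton] at *; omega

lemma mem_star_image {e : Finset ℕ} {V : Finset ℕ} {u : ℕ} (hu : u ∈ e) (hc : e.card = 2)
    (hs : e ⊆ V) : e ∈ (V.erase u).image (fun t => ({u, t} : Finset ℕ)) := by
  obtain ⟨w, hw, rfl⟩ := pair_other hc hu
  exact mem_image.mpr ⟨w, mem_erase.mpr ⟨hw, hs (by simp)⟩, rfl⟩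

lemma quad_bound (p q r s : ℕ) {X : Finset (Finset ℕ)}
    (hX : ∀ e ∈ X, e.card = 2 ∧ (e ∩ ({p,q} : Finset ℕ)).Nonempty ∧
      (e ∩ ({r,s} : Finset ℕ)).Nonempty)
    (hd : ({p,q} : Finset ℕ) ∩ ({r,s} : Finset ℕ) = ∅) : X.card ≤ 4 := by
  have hsub : X ⊆ ({({p,r} : Finset ℕ), {p,s}, {q,r}, {q,s}} : Finset (Finset ℕ)) := by
    intro e he
    obtain ⟨hc, ⟨α, hα⟩, ⟨β, hβ⟩⟩ := hX e he
    obtain ⟨hαe, hαpq⟩ := mem_inter.mp hα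
    obtain ⟨hβe, hβrs⟩ := mem_inter.mp hβ
    have hαβ : α ≠ β := by
      rintro rfl
      exact notMem_empty α (hd ▸ mem_inter.mpr ⟨hαpq, hβrs⟩)
    have he2 := pair_eq_of_mem hc hαe hβe hαβ
    rcases mem_insert.mp hαpq with rfl | hα2 <;> rcases mem_insert.mp hβrs with rfl | hβ2
    · rw [he2]; simp
    · rw [mem_singleton.mp hβ2] at he2; rw [he2]; simp
    · rw [mem_singleton.mp hα2] at he2; rw [he2]; simp
    · rw [mem_singleton.mp hα2, mem_singleton.mp hβ2] at he2; rw [he2]; simp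
  exact (card_le_card hsub).trans fourCardLe

lemma cross_lemma (V : Finset ℕ) (A B : Finset (Finset ℕ)) (hm : 5 ≤ V.card)
    (hAne : A.Nonempty) (hBne : B.Nonempty)
    (hA : ∀ e ∈ A, e.card = 2 ∧ e ⊆ V) (hB : ∀ f ∈ B, f.card = 2 ∧ f ⊆ V)
    (hcross : ∀ e ∈ A, ∀ f ∈ B, (e ∩ f).Nonempty) :
    A.card + B.card + 2 ≤ 2 * V.card := by
  by_cases hdA : ∃ a₁ ∈ A, ∃ a₂ ∈ A, a₁ ∩ a₂ = ∅
  · obtain ⟨a₁, ha₁, a₂, ha₂, hd⟩ := hdA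
    obtain ⟨hc1, hs1⟩ := hA a₁ ha₁
    obtain ⟨hc2, hs2⟩ := hA a₂ ha₂
    -- B is inside the 4 cross edges
    have hB4 : B.card ≤ 4 := by
      obtain ⟨p, hp⟩ := card_pos.mp (by rw [hc1]; norm_num)
      obtain ⟨q, hqp, ha₁eq⟩ := pair_other hc1 hp
      obtain ⟨r, hr⟩ := card_pos.mp (by rw [hc2]; norm_num)
      obtain ⟨s, hsr, ha₂eq⟩ := pair_other hc2 hr
      refine quad_bound p q r s (fun f hf => ⟨(hB f hf).1, ?_, ?_⟩) ?_
      · rw [← ha₁eq, inter_comm]; exact hcross a₁ ha₁ f hf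
      · rw [← ha₂eq, inter_comm]; exact hcross a₂ ha₂ f hf
      · rw [← ha₁eq, ← ha₂eq]; exact hd
    by_cases hdB : ∃ b₁ ∈ B, ∃ b₂ ∈ B, b₁ ∩ b₂ = ∅
    · -- A also inside 4 cross edges: total ≤ 8
      obtain ⟨b₁, hb₁, b₂, hb₂, hdb⟩ := hdB
      obtain ⟨hcb1, hsb1⟩ := hB b₁ hb₁
      obtain ⟨hcb2, hsb2⟩ := hB b₂ hb₂
      have hA4 : A.card ≤ 4 := by
        obtain ⟨p, hp⟩ := card_pos.mp (by rw [hcb1]; norm_num)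
        obtain ⟨q, hqp, hb₁eq⟩ := pair_other hcb1 hp
        obtain ⟨r, hr⟩ := card_pos.mp (by rw [hcb2]; norm_num)
        obtain ⟨s, hsr, hb₂eq⟩ := pair_other hcb2 hr
        refine quad_bound p q r s (fun e he => ⟨(hA e he).1, ?_, ?_⟩) ?_
        · rw [← hb₁eq]; exact hcross e he b₁ hb₁
        · rw [← hb₂eq]; exact hcross e he b₂ hb₂
        · rw [← hb₁eq, ← hb₂eq]; exact hdb
      omega
    · push_neg at hdB
      obtain ⟨b₀, hb₀⟩ := id hBne
      by_cases hone : ∀ b ∈ B, b = b₀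
      · -- B = {b₀}
        have hBcard : B.card ≤ 1 := by
          refine (card_le_card (fun b hb => ?_)).trans (card_singleton b₀).le
          simp [hone b hb]
        obtain ⟨hcb, hsb⟩ := hB b₀ hb₀
        obtain ⟨p, hp⟩ := card_pos.mp (by rw [hcb]; norm_num)
        obtain ⟨q, hqp, hb₀eq⟩ := pair_other hcb hp
        have hAmb : A.card + 3 ≤ 2 * V.card := by
          refine meet_edge_bound (hsb hp) (hsb (hb₀eq ▸ (by simp : q ∈ ({p,q} : Finset ℕ))))
            (Ne.symm hqp) (by omega) (fun e he => ⟨?_, (hA e he).1, (hA e he).2⟩)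
          rw [← hb₀eq]; exact hcross e he b₀ hb₀
        omega
      · push_neg at hone
        obtain ⟨b₁, hb₁B, hb₁ne⟩ := hone
        obtain ⟨hcb0, hsb0⟩ := hB b₀ hb₀
        obtain ⟨hcb1, hsb1⟩ := hB b₁ hb₁B
        have hint01 : (b₀ ∩ b₁).Nonempty :=
          (hdB b₀ hb₀ b₁ hb₁B)
        obtain ⟨u, hu⟩ := hint01
        obtain ⟨hub0, hub1⟩ := mem_inter.mp hu
        obtain ⟨p', hp'u, hb₀eq⟩ := pair_other hcb0 hub0
        obtain ⟨q', hq'u, hb₁eq⟩ := pair_other hcb1 hub1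
        have hp'q' : p' ≠ q' := by
          rintro rfl; exact hb₁ne (by rw [hb₁eq, hb₀eq])
        -- core argument, u belongs to one of a₁, a₂
        have core : ∀ c₁ c₂ : Finset ℕ, c₁ ∈ A → c₂ ∈ A → c₁ ∩ c₂ = ∅ →
            u ∈ c₁ → A.card + B.card + 2 ≤ 2 * V.card := by
          intro c₁ c₂ hc₁A hc₂A hdc hu1
          have hc₂2 := (hA c₂ hc₂A).1
          have hu2 : u ∉ c₂ := fun h => notMem_empty u (hdc ▸ mem_inter.mpr ⟨hu1, h⟩)
          have hp'c2 : p' ∈ c₂ := by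
            obtain ⟨γ, hγ⟩ := hcross c₂ hc₂A b₀ hb₀
            obtain ⟨hγ2, hγb0⟩ := mem_inter.mp hγ
            rw [hb₀eq] at hγb0
            rcases mem_insert.mp hγb0 with rfl | hγp
            · exact absurd hγ2 hu2
            · rwa [← mem_singleton.mp hγp]
          have hq'c2 : q' ∈ c₂ := by
            obtain ⟨γ, hγ⟩ := hcross c₂ hc₂A b₁ hb₁B
            obtain ⟨hγ2, hγb1⟩ := mem_inter.mp hγ
            rw [hb₁eq] at hγb1
            rcases mem_insert.mp hγb1 with rfl | hγq
            · exact absurd hγ2 hu2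
            · rwa [← mem_singleton.mp hγq]
          have hc₂eq : c₂ = {p', q'} := pair_eq_of_mem hc₂2 hp'c2 hq'c2 hp'q'
          -- B ⊆ {b₀, b₁}
          have hBsub : B ⊆ {b₀, b₁} := by
            intro f hf
            have hfb0 : (f ∩ b₀).Nonempty := (hdB f hf b₀ hb₀)
            have hfb1 : (f ∩ b₁).Nonempty := (hdB f hf b₁ hb₁B)
            rw [hb₀eq] at hfb0; rw [hb₁eq] at hfb1
            rcases pairs_pierce (hB f hf).1 hp'q' hfb0 hfb1 with huf | hfeq
            · obtain ⟨γ, hγ⟩ := hcross c₂ hc₂A f hf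
              obtain ⟨hγ2, hγf⟩ := mem_inter.mp hγ
              have hγu : γ ≠ u := fun h => hu2 (h ▸ hγ2)
              have hfγ : f = {u, γ} := pair_eq_of_mem (hB f hf).1 huf hγf (Ne.symm hγu)
              rw [hc₂eq] at hγ2
              rcases mem_insert.mp hγ2 with rfl | hγq
              · simp [hfγ, ← hb₀eq]
              · rw [mem_singleton.mp hγq] at hfγ
                simp [hfγ, ← hb₁eq]
            · exfalso
              have := hcross c₁ hc₁A f hf
              rw [hfeq, ← hc₂eq] at this
              obtain ⟨γ, hγ⟩ := this
              obtain ⟨h1, h2⟩ := mem_inter.mp hγ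
              exact notMem_empty γ (hdc ▸ mem_inter.mpr ⟨h1, h2⟩)
          have hBcard : B.card ≤ 2 := (card_le_card hBsub).trans twoCardLe
          -- A ⊆ star u ∪ {c₂}
          have huV : u ∈ V := hsb0 hub0
          have hAsub : A ⊆ ((V.erase u).image (fun t => ({u, t} : Finset ℕ))) ∪ {c₂} := by
            intro e he
            have he1 : (e ∩ b₀).Nonempty := hcross e he b₀ hb₀
            have he2 : (e ∩ b₁).Nonempty := hcross e he b₁ hb₁B
            rw [hb₀eq] at he1; rw [hb₁eq] at he2
            rcases pairs_pierce (hA e he).1 hp'q' he1 he2 with hue | heq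
            · exact mem_union_left _ (mem_star_image hue (hA e he).1 (hA e he).2)
            · rw [← hc₂eq] at heq
              exact mem_union_right _ (by simp [heq])
          have hAcard : A.card ≤ (V.card - 1) + 1 := by
            refine (card_le_card hAsub).trans (card_union_le _ _ |>.trans ?_)
            have := card_image_le (s := V.erase u) (f := fun t => ({u, t} : Finset ℕ))
            rw [card_erase_of_mem huV] at this
            simp only [card_singleton]
            omega
          omega
        -- u must be in a₁ or a₂
        by_cases hua1 : u ∈ a₁
        · exact core a₁ a₂ ha₁ ha₂ hd hua1
        by_cases hua2 : u ∈ a₂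
        · exact core a₂ a₁ ha₂ ha₁ (by rw [inter_comm]; exact hd) hua2
        · exfalso
          have h1 : (a₁ ∩ b₀).Nonempty := hcross a₁ ha₁ b₀ hb₀
          have h2 : (a₂ ∩ b₀).Nonempty := hcross a₂ ha₂ b₀ hb₀
          obtain ⟨γ, hγ⟩ := h1
          obtain ⟨hγ1, hγb⟩ := mem_inter.mp hγ
          obtain ⟨δ, hδ⟩ := h2
          obtain ⟨hδ2, hδb⟩ := mem_inter.mp hδ
          rw [hb₀eq] at hγb hδb
          have hγp : γ = p' := by
            rcases mem_insert.mp hγb with rfl | h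
            · exact absurd hγ1 hua1
            · exact mem_singleton.mp h
          have hδp : δ = p' := by
            rcases mem_insert.mp hδb with rfl | h
            · exact absurd hδ2 hua2
            · exact mem_singleton.mp h
          subst hγp; subst hδp
          exact notMem_empty δ (hd ▸ mem_inter.mpr ⟨hγ1, hδ2⟩)
  · push_neg at hdA
    by_cases hstar : ∃ u, ∀ e ∈ A, u ∈ e
    · obtain ⟨u, hu⟩ := hstar
      obtain ⟨e₀, he₀⟩ := id hAne
      have huV : u ∈ V := (hA e₀ he₀).2 (hu e₀ he₀)
      by_cases hBu : ∀ f ∈ B, u ∈ f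
      · have h1 : A.card ≤ V.card - 1 :=
          star_bound huV (fun e he => ⟨hu e he, (hA e he).1, (hA e he).2⟩)
        have h2 : B.card ≤ V.card - 1 :=
          star_bound huV (fun f hf => ⟨hBu f hf, (hB f hf).1, (hB f hf).2⟩)
        omega
      · push_neg at hBu
        obtain ⟨bs, hbsB, hubs⟩ := hBu
        obtain ⟨hcbs, hsbs⟩ := hB bs hbsB
        obtain ⟨p, hpbs⟩ := card_pos.mp (by rw [hcbs]; norm_num)
        obtain ⟨q, hqp, hbseq⟩ := pair_other hcbs hpbs
        have hqbs : q ∈ bs := hbseq ▸ (by simp)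
        have hup : u ≠ p := fun h => hubs (h ▸ hpbs)
        have huq : u ≠ q := fun h => hubs (h ▸ hqbs)
        have hAsub : ∀ e ∈ A, e = {u, p} ∨ e = {u, q} := by
          intro e he
          obtain ⟨γ, hγ⟩ := hcross e he bs hbsB
          obtain ⟨hγe, hγbs⟩ := mem_inter.mp hγ
          rw [hbseq] at hγbs
          rcases mem_insert.mp hγbs with rfl | hγq
          · exact Or.inl (pair_eq_of_mem (hA e he).1 (hu e he) hγe hup)
          · rw [mem_singleton.mp hγq] at hγe
            exact Or.inr (pair_eq_of_mem (hA e he).1 (hu e he) hγe huq)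
        obtain ⟨a₀, ha₀⟩ := id hAne
        by_cases hAone : ∀ e ∈ A, e = a₀
        · have hAcard : A.card ≤ 1 := by
            refine (card_le_card (fun e he => ?_)).trans (card_singleton a₀).le
            simp [hAone e he]
          obtain ⟨hca0, hsa0⟩ := hA a₀ ha₀
          obtain ⟨p0, hp0⟩ := card_pos.mp (by rw [hca0]; norm_num)
          obtain ⟨q0, hq0p, ha₀eq⟩ := pair_other hca0 hp0
          have hBmb : B.card + 3 ≤ 2 * V.card := by
            refine meet_edge_bound (hsa0 hp0) (hsa0 (ha₀eq ▸ (by simp : q0 ∈ ({p0,q0} : Finset ℕ))))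
              (Ne.symm hq0p) (by omega) (fun f hf => ⟨?_, (hB f hf).1, (hB f hf).2⟩)
            rw [← ha₀eq]
            obtain ⟨γ, hγ⟩ := hcross a₀ ha₀ f hf
            exact ⟨γ, by rw [inter_comm]; exact hγ⟩
          omega
        · push_neg at hAone
          obtain ⟨a₁, ha₁A, ha₁ne⟩ := hAone
          have hupA : ({u, p} : Finset ℕ) ∈ A ∧ ({u, q} : Finset ℕ) ∈ A := by
            rcases hAsub a₀ ha₀ with h0 | h0 <;> rcases hAsub a₁ ha₁A with h1 | h1
            · exact absurd (h1.trans h0.symm) ha₁ne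
            · exact ⟨h0 ▸ ha₀, h1 ▸ ha₁A⟩
            · exact ⟨h1 ▸ ha₁A, h0 ▸ ha₀⟩

            · exact absurd (h1.trans h0.symm) ha₁ne
          have hAcard : A.card ≤ 2 := by
            refine (card_le_card (fun e he => ?_)).trans
              (twoCardLe (a := ({u,p} : Finset ℕ)) (b := ({u,q} : Finset ℕ)))
            rcases hAsub e he with h | h <;> simp [h]
          have hBsub : B ⊆ ((V.erase u).image (fun t => ({u, t} : Finset ℕ))) ∪ {({p, q} : Finset ℕ)} := by
            intro f hf
            have h1 : (f ∩ ({u, p} : Finset ℕ)).Nonempty := by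
              obtain ⟨γ, hγ⟩ := hcross _ hupA.1 f hf
              exact ⟨γ, by rw [inter_comm]; exact hγ⟩
            have h2 : (f ∩ ({u, q} : Finset ℕ)).Nonempty := by
              obtain ⟨γ, hγ⟩ := hcross _ hupA.2 f hf
              exact ⟨γ, by rw [inter_comm]; exact hγ⟩
            rcases pairs_pierce (hB f hf).1 (by rintro rfl; exact hqp rfl : p ≠ q) h1 h2 with huf | hfeq
            · exact mem_union_left _ (mem_star_image huf (hB f hf).1 (hB f hf).2)
            · exact mem_union_right _ (by simp [hfeq])
          have hBcard : B.card ≤ (V.card - 1) + 1 := by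
            refine (card_le_card hBsub).trans (card_union_le _ _ |>.trans ?_)
            have := card_image_le (s := V.erase u) (f := fun t => ({u, t} : Finset ℕ))
            rw [card_erase_of_mem huV] at this
            simp only [card_singleton]
            omega
          omega
    · -- triangle case
      push_neg at hstar
      obtain ⟨e₁, he₁⟩ := id hAne
      obtain ⟨hce1, hse1⟩ := hA e₁ he₁
      obtain ⟨u, hu⟩ := card_pos.mp (by rw [hce1]; norm_num)
      obtain ⟨v, hvu, he₁eq⟩ := pair_other hce1 hu
      obtain ⟨e₂, he₂A, hue₂⟩ := hstar u
      have hv2 : v ∈ e₂ := by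
        have := (hdA e₂ he₂A e₁ he₁)
        obtain ⟨t, ht⟩ := this
        obtain ⟨ht2, ht1⟩ := mem_inter.mp ht
        rw [he₁eq] at ht1
        rcases mem_insert.mp ht1 with rfl | h
        · exact absurd ht2 hue₂
        · rwa [← mem_singleton.mp h]
      obtain ⟨w, hwv, he₂eq⟩ := pair_other (hA e₂ he₂A).1 hv2
      have hwu : w ≠ u := by
        rintro rfl; exact hue₂ (he₂eq ▸ (by simp))
      obtain ⟨e₃, he₃A, hve₃⟩ := hstar v
      have hu3 : u ∈ e₃ := by
        obtain ⟨t, ht⟩ := (hdA e₃ he₃A e₁ he₁)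
        obtain ⟨ht3, ht1⟩ := mem_inter.mp ht
        rw [he₁eq] at ht1
        rcases mem_insert.mp ht1 with rfl | h
        · exact ht3
        · exact absurd (mem_singleton.mp h ▸ ht3) hve₃
      have hw3 : w ∈ e₃ := by
        obtain ⟨t, ht⟩ := (hdA e₃ he₃A e₂ he₂A)
        obtain ⟨ht3, ht2⟩ := mem_inter.mp ht
        rw [he₂eq] at ht2
        rcases mem_insert.mp ht2 with rfl | h
        · exact absurd ht3 hve₃
        · rwa [← mem_singleton.mp h]
      have he₃eq : e₃ = {u, w} := pair_eq_of_mem (hA e₃ he₃A).1 hu3 hw3 (Ne.symm hwu)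
      have huv : u ≠ v := Ne.symm hvu
      have huw : u ≠ w := Ne.symm hwu
      have hvw : v ≠ w := Ne.symm hwv
      have hAT : A ⊆ ({({u,v} : Finset ℕ), {v,w}, {u,w}} : Finset (Finset ℕ)) := by
        intro e he
        refine triangle_capture (hA e he).1 huv huw hvw ?_ ?_ ?_
        · rw [← he₁eq]; exact (hdA e he e₁ he₁)
        · rw [← he₂eq]; exact (hdA e he e₂ he₂A)
        · rw [← he₃eq]; exact (hdA e he e₃ he₃A)
      have hBT : B ⊆ ({({u,v} : Finset ℕ), {v,w}, {u,w}} : Finset (Finset ℕ)) := by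
        intro f hf
        refine triangle_capture (hB f hf).1 huv huw hvw ?_ ?_ ?_
        · rw [← he₁eq, inter_comm]; exact hcross e₁ he₁ f hf
        · rw [← he₂eq, inter_comm]; exact hcross e₂ he₂A f hf
        · rw [← he₃eq, inter_comm]; exact hcross e₃ he₃A f hf
      have h1 : A.card ≤ 3 := (card_le_card hAT).trans threeCardLe
      have h2 : B.card ≤ 3 := (card_le_card hBT).trans threeCardLe
      omega

lemma key_pair_bound (F : Finset (Finset ℕ)) (hF3 : ∀ D ∈ F, D.card = 3)
    (hint : ∀ D ∈ F, ∀ E ∈ F, ¬ Disjoint D E)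
    (hM : ∀ x y : ℕ, ∃ M ∈ F, x ∉ M ∧ y ∉ M)
    (A : Finset ℕ) (hAF : A ∈ F) (a w : ℕ) (haA : a ∈ A) (hwA : w ∉ A) :
    (F.filter (fun D => D ∩ A = {a} ∧ w ∈ D)).card ≤ 2 := by
  obtain ⟨M, hMF, haM, hwM⟩ := hM a w
  have hMA : (M ∩ A).Nonempty := not_disjoint_iff_nonempty_inter.mp (hint M hMF A hAF)
  have hcard : (M \ A).card ≤ 2 := by
    have h1 := card_sdiff_add_card_inter M A
    have h2 : 1 ≤ (M ∩ A).card := card_pos.mpr hMA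
    have h3 := hF3 M hMF
    omega
  refine (card_le_of_covered (T := M \ A) (f := fun z => {a, w, z}) ?_).trans hcard
  intro D hD
  obtain ⟨hDF, hDa, hwD⟩ := mem_filter.mp hD |>.imp id (fun h => h)
  have haD : a ∈ D := by
    have : a ∈ D ∩ A := by rw [hDa]; simp
    exact (mem_inter.mp this).1
  have haw : a ≠ w := fun h => hwA (h ▸ haA)
  obtain ⟨z, hza, hzw, hDeq⟩ := triple_other (hF3 D hDF) haD hwD haw
  refine ⟨z, ?_, hDeq⟩
  obtain ⟨t, ht⟩ := not_disjoint_iff_nonempty_inter.mp (hint D hDF M hMF)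
  obtain ⟨htD, htM⟩ := mem_inter.mp ht
  have htz : t = z := by
    rw [hDeq] at htD
    rcases mem_insert.mp htD with rfl | h
    · exact absurd htM haM
    rcases mem_insert.mp h with rfl | h2
    · exact absurd htM hwM
    · exact mem_singleton.mp h2
  rw [htz] at htM
  refine mem_sdiff.mpr ⟨htM, fun hzA => ?_⟩
  have hz2 : z ∈ D ∩ A := mem_inter.mpr ⟨by rw [hDeq]; simp, hzA⟩
  rw [hDa] at hz2
  exact hza (mem_singleton.mp hz2)

lemma opp_bound (F : Finset (Finset ℕ)) (hF3 : ∀ D ∈ F, D.card = 3)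
    (hint : ∀ D ∈ F, ∀ E ∈ F, ¬ Disjoint D E)
    (hM : ∀ x y : ℕ, ∃ M ∈ F, x ∉ M ∧ y ∉ M)
    (A : Finset ℕ) (hAF : A ∈ F) (a b c : ℕ) (hab : a ≠ b) (hac : a ≠ c) (hbc : b ≠ c)
    (hA : A = {a, b, c}) :
    (F.filter (fun D => D ∩ A = {a})).card + (F.filter (fun D => D ∩ A = {b, c})).card ≤ 4 := by
  set Fa := F.filter (fun D => D ∩ A = ({a} : Finset ℕ)) with hFaDef
  set Fbc := F.filter (fun D => D ∩ A = ({b, c} : Finset ℕ)) with hFbcDef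
  have haA : a ∈ A := by simp [hA]
  have hbA : b ∈ A := by simp [hA]
  have hcA : c ∈ A := by simp [hA]
  have hmemFa : ∀ D ∈ Fa, D ∈ F ∧ a ∈ D ∧ b ∉ D ∧ c ∉ D := by
    intro D hD
    obtain ⟨hDF, hDa⟩ := mem_filter.mp hD
    refine ⟨hDF, ?_, fun hbD => ?_, fun hcD => ?_⟩
    · have : a ∈ D ∩ A := by rw [hDa]; simp
      exact (mem_inter.mp this).1
    · have : b ∈ D ∩ A := mem_inter.mpr ⟨hbD, hbA⟩
      rw [hDa] at this
      exact hab (mem_singleton.mp this).symm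
    · have : c ∈ D ∩ A := mem_inter.mpr ⟨hcD, hcA⟩
      rw [hDa] at this
      exact hac (mem_singleton.mp this).symm
  have hFbc_struct : ∀ D ∈ Fbc, ∃ w, w ∉ A ∧ D = {b, c, w} := by
    intro D hD
    obtain ⟨hDF, hDbc⟩ := mem_filter.mp hD
    have hbD : b ∈ D := by
      have : b ∈ D ∩ A := by rw [hDbc]; simp
      exact (mem_inter.mp this).1
    have hcD : c ∈ D := by
      have : c ∈ D ∩ A := by rw [hDbc]; simp
      exact (mem_inter.mp this).1
    obtain ⟨w, hwb, hwc, hDeq⟩ := triple_other (hF3 D hDF) hbD hcD hbc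
    refine ⟨w, fun hwAmem => ?_, hDeq⟩
    have : w ∈ D ∩ A := mem_inter.mpr ⟨hDeq ▸ (by simp), hwAmem⟩
    rw [hDbc] at this
    rcases mem_insert.mp this with h | h
    · exact hwb h
    · exact hwc (mem_singleton.mp h)
  have hFa_w : ∀ w, w ∉ A → (∀ D ∈ Fa, w ∈ D) → Fa.card ≤ 2 := by
    intro w hw hall
    refine (card_le_card (fun D hD => ?_)).trans (key_pair_bound F hF3 hint hM A hAF a w haA hw)
    obtain ⟨hDF, hDa⟩ := mem_filter.mp hD
    exact mem_filter.mpr ⟨hDF, hDa, hall D hD⟩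
  by_cases h0 : Fbc.card = 0
  · -- Fa.card ≤ 4 via M₁ = member avoiding {a,b}
    obtain ⟨M₁, hM₁F, haM₁, hbM₁⟩ := hM a b
    have hcM₁ : c ∈ M₁ := by
      obtain ⟨t, ht⟩ := not_disjoint_iff_nonempty_inter.mp (hint M₁ hM₁F A hAF)
      obtain ⟨htM, htA⟩ := mem_inter.mp ht
      rw [hA] at htA
      rcases mem_insert.mp htA with rfl | h
      · exact absurd htM haM₁
      rcases mem_insert.mp h with rfl | h2
      · exact absurd htM hbM₁
      · rwa [← mem_singleton.mp h2]
    have hMe : (M₁.erase c).card = 2 := by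
      rw [card_erase_of_mem hcM₁, hF3 M₁ hM₁F]
    obtain ⟨p, hp⟩ := card_pos.mp (by rw [hMe]; norm_num)
    obtain ⟨q, hqp, heq⟩ := pair_other hMe hp
    have hpM : p ∈ M₁ := (mem_erase.mp hp).2
    have hqM : q ∈ M₁ := by
      have : q ∈ M₁.erase c := heq ▸ (by simp)
      exact (mem_erase.mp this).2
    have hpA : p ∉ A := by
      rw [hA]
      simp only [mem_insert, mem_singleton]
      push_neg
      exact ⟨fun h => haM₁ (h ▸ hpM), fun h => hbM₁ (h ▸ hpM), (mem_erase.mp hp).1⟩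
    have hqA : q ∉ A := by
      have hqc : q ≠ c := by
        have : q ∈ M₁.erase c := heq ▸ (by simp)
        exact (mem_erase.mp this).1
      rw [hA]
      simp only [mem_insert, mem_singleton]
      push_neg
      exact ⟨fun h => haM₁ (h ▸ hqM), fun h => hbM₁ (h ▸ hqM), hqc⟩
    have hsplit : Fa ⊆ (F.filter (fun D => D ∩ A = {a} ∧ p ∈ D)) ∪
        (F.filter (fun D => D ∩ A = {a} ∧ q ∈ D)) := by
      intro D hD
      obtain ⟨hDF, haD, hbD, hcD⟩ := hmemFa D hD
      obtain ⟨hDF', hDa⟩ := mem_filter.mp hD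
      obtain ⟨t, ht⟩ := not_disjoint_iff_nonempty_inter.mp (hint D hDF M₁ hM₁F)
      obtain ⟨htD, htM⟩ := mem_inter.mp ht
      have htc : t ≠ c := fun h => hcD (h ▸ htD)
      have htpq : t ∈ M₁.erase c := mem_erase.mpr ⟨htc, htM⟩
      rw [heq] at htpq
      rcases mem_insert.mp htpq with rfl | h
      · exact mem_union_left _ (mem_filter.mpr ⟨hDF, hDa, htD⟩)
      · rw [mem_singleton.mp h] at htD
        exact mem_union_right _ (mem_filter.mpr ⟨hDF, hDa, htD⟩)
    have hc1 := key_pair_bound F hF3 hint hM A hAF a p haA hpA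
    have hc2 := key_pair_bound F hF3 hint hM A hAF a q haA hqA
    have := (card_le_card hsplit).trans (card_union_le _ _)
    omega
  by_cases h1 : Fbc.card = 1
  · obtain ⟨D₀, hD₀eq⟩ := card_eq_one.mp h1
    have hD₀ : D₀ ∈ Fbc := hD₀eq ▸ mem_singleton_self D₀
    obtain ⟨w, hwA, hD₀structeq⟩ := hFbc_struct D₀ hD₀
    have hD₀F : D₀ ∈ F := (mem_filter.mp hD₀).1
    have hallw : ∀ D ∈ Fa, w ∈ D := by
      intro D hD
      obtain ⟨hDF, haD, hbD, hcD⟩ := hmemFa D hD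
      obtain ⟨t, ht⟩ := not_disjoint_iff_nonempty_inter.mp (hint D hDF D₀ hD₀F)
      obtain ⟨htD, htD₀⟩ := mem_inter.mp ht
      rw [hD₀structeq] at htD₀
      rcases mem_insert.mp htD₀ with rfl | h
      · exact absurd htD hbD
      rcases mem_insert.mp h with rfl | h2
      · exact absurd htD hcD
      · rwa [← mem_singleton.mp h2]
    have := hFa_w w hwA hallw
    omega
  · have h2 : 2 ≤ Fbc.card := by omega
    obtain ⟨D₀, hD₀, D₁, hD₁, hD01⟩ := one_lt_card.mp (by omega : 1 < Fbc.card)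
    obtain ⟨w, hwA, hD₀eq⟩ := hFbc_struct D₀ hD₀
    obtain ⟨w', hw'A, hD₁eq⟩ := hFbc_struct D₁ hD₁
    have hD₀F : D₀ ∈ F := (mem_filter.mp hD₀).1
    have hD₁F : D₁ ∈ F := (mem_filter.mp hD₁).1
    have hww' : w ≠ w' := by
      rintro rfl
      exact hD01 (hD₀eq.trans hD₁eq.symm)
    have hgetw : ∀ D ∈ Fa, w ∈ D := by
      intro D hD
      obtain ⟨hDF, haD, hbD, hcD⟩ := hmemFa D hD
      obtain ⟨t, ht⟩ := not_disjoint_iff_nonempty_inter.mp (hint D hDF D₀ hD₀F)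
      obtain ⟨htD, htD₀⟩ := mem_inter.mp ht
      rw [hD₀eq] at htD₀
      rcases mem_insert.mp htD₀ with rfl | h
      · exact absurd htD hbD
      rcases mem_insert.mp h with rfl | h2
      · exact absurd htD hcD
      · rwa [← mem_singleton.mp h2]
    have hgetw' : ∀ D ∈ Fa, w' ∈ D := by
      intro D hD
      obtain ⟨hDF, haD, hbD, hcD⟩ := hmemFa D hD
      obtain ⟨t, ht⟩ := not_disjoint_iff_nonempty_inter.mp (hint D hDF D₁ hD₁F)
      obtain ⟨htD, htD₁⟩ := mem_inter.mp ht
      rw [hD₁eq] at htD₁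
      rcases mem_insert.mp htD₁ with rfl | h
      · exact absurd htD hbD
      rcases mem_insert.mp h with rfl | h2
      · exact absurd htD hcD
      · rwa [← mem_singleton.mp h2]
    have hFa1 : Fa.card ≤ 1 := by
      refine (card_le_card (fun D hD => ?_)).trans (card_singleton ({a, w, w'} : Finset ℕ)).le
      obtain ⟨hDF, haD, hbD, hcD⟩ := hmemFa D hD
      have hwD : w ∈ D := hgetw D hD
      have hw'D : w' ∈ D := hgetw' D hD
      have haw : a ≠ w := fun h => hwA (h ▸ haA)
      obtain ⟨z, hza, hzw, hDeq⟩ := triple_other (hF3 D hDF) haD hwD haw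
      have hw'z : w' = z := by
        rw [hDeq] at hw'D
        rcases mem_insert.mp hw'D with rfl | h
        · exact absurd haA hw'A
        rcases mem_insert.mp h with rfl | h2
        · exact absurd rfl hww'
        · exact mem_singleton.mp h2
      rw [mem_singleton, hDeq, hw'z]
    have hFbc2 : Fbc.card ≤ 2 := by
      obtain ⟨M, hMF, hbM, hcM⟩ := hM b c
      have haM : a ∈ M := by
        obtain ⟨t, ht⟩ := not_disjoint_iff_nonempty_inter.mp (hint M hMF A hAF)
        obtain ⟨htM, htA⟩ := mem_inter.mp ht
        rw [hA] at htA
        rcases mem_insert.mp htA with rfl | h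
        · exact htM
        rcases mem_insert.mp h with rfl | h2
        · exact absurd htM hbM
        · exact absurd (mem_singleton.mp h2 ▸ htM) hcM
      have hMe : (M.erase a).card = 2 := by
        rw [card_erase_of_mem haM, hF3 M hMF]
      refine (card_le_of_covered (T := M.erase a) (f := fun t => {b, c, t}) ?_).trans hMe.le
      intro D hD
      obtain ⟨t', ht'A, hDeq⟩ := hFbc_struct D hD
      have hDF : D ∈ F := (mem_filter.mp hD).1
      refine ⟨t', mem_erase.mpr ⟨fun h => ht'A (h ▸ haA), ?_⟩, hDeq⟩
      obtain ⟨s, hs⟩ := not_disjoint_iff_nonempty_inter.mp (hint D hDF M hMF)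
      obtain ⟨hsD, hsM⟩ := mem_inter.mp hs
      rw [hDeq] at hsD
      rcases mem_insert.mp hsD with rfl | h
      · exact absurd hsM hbM
      rcases mem_insert.mp h with rfl | h2
      · exact absurd hsM hcM
      · rwa [← mem_singleton.mp h2]
    omega

open scoped Classical in
lemma tau3_bound (F : Finset (Finset ℕ)) (hF3 : ∀ D ∈ F, D.card = 3)
    (hint : ∀ D ∈ F, ∀ E ∈ F, ¬ Disjoint D E)
    (hM : ∀ x y : ℕ, ∃ M ∈ F, x ∉ M ∧ y ∉ M)
    (hne : F.Nonempty) : F.card ≤ 13 := by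
  obtain ⟨A, hAF⟩ := hne
  obtain ⟨a, b, c, hab, hac, hbc, hA⟩ := Finset.card_eq_three.mp (hF3 A hAF)
  have hclass : ∀ D ∈ F, D = A ∨ D ∩ A = {a} ∨ D ∩ A = {b, c} ∨ D ∩ A = {b} ∨
      D ∩ A = {a, c} ∨ D ∩ A = {c} ∨ D ∩ A = {a, b} := by
    intro D hD
    have hne' : (D ∩ A).Nonempty := not_disjoint_iff_nonempty_inter.mp (hint D hD A hAF)
    have hall : a ∈ D → b ∈ D → c ∈ D → D = A := by
      intro ha hb hc
      have hsub : A ⊆ D := by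
        rw [hA]; intro t ht
        rcases mem_insert.mp ht with rfl | ht
        · exact ha
        rcases mem_insert.mp ht with rfl | ht
        · exact hb
        · rw [mem_singleton.mp ht]; exact hc
      exact (eq_of_subset_of_card_le hsub (by rw [hF3 D hD, hF3 A hAF])).symm
    have hmk : ∀ t, t ∈ D ∩ A ↔ t ∈ D ∧ (t = a ∨ t = b ∨ t = c) := by
      intro t; rw [hA]; simp only [mem_inter, mem_insert, mem_singleton]
    by_cases ha : a ∈ D
    · by_cases hb : b ∈ D
      · by_cases hc : c ∈ D
        · exact Or.inl (hall ha hb hc)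
        · right; right; right; right; right; right
          ext t; rw [hmk]
          constructor
          · rintro ⟨htD, rfl | rfl | rfl⟩
            · exact mem_insert_self _ _
            · exact mem_insert_of_mem (mem_singleton_self _)
            · exact absurd htD hc
          · intro ht
            rcases mem_insert.mp ht with rfl | ht
            · exact ⟨ha, Or.inl rfl⟩
            · rw [mem_singleton.mp ht]; exact ⟨hb, Or.inr (Or.inl rfl)⟩
      · by_cases hc : c ∈ D
        · right; right; right; right; left
          ext t; rw [hmk]
          constructor
          · rintro ⟨htD, rfl | rfl | rfl⟩
            · exact mem_insert_self _ _
            · exact absurd htD hb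
            · exact mem_insert_of_mem (mem_singleton_self _)
          · intro ht
            rcases mem_insert.mp ht with rfl | ht
            · exact ⟨ha, Or.inl rfl⟩
            · rw [mem_singleton.mp ht]; exact ⟨hc, Or.inr (Or.inr rfl)⟩
        · right; left
          ext t; rw [hmk]
          constructor
          · rintro ⟨htD, rfl | rfl | rfl⟩
            · exact mem_singleton_self _
            · exact absurd htD hb
            · exact absurd htD hc
          · intro ht
            rw [mem_singleton.mp ht]; exact ⟨ha, Or.inl rfl⟩
    · by_cases hb : b ∈ D
      · by_cases hc : c ∈ D
        · right; right; left
          ext t; rw [hmk]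
          constructor
          · rintro ⟨htD, rfl | rfl | rfl⟩
            · exact absurd htD ha
            · exact mem_insert_self _ _
            · exact mem_insert_of_mem (mem_singleton_self _)
          · intro ht
            rcases mem_insert.mp ht with rfl | ht
            · exact ⟨hb, Or.inr (Or.inl rfl)⟩
            · rw [mem_singleton.mp ht]; exact ⟨hc, Or.inr (Or.inr rfl)⟩
        · right; right; right; left
          ext t; rw [hmk]
          constructor
          · rintro ⟨htD, rfl | rfl | rfl⟩
            · exact absurd htD ha
            · exact mem_singleton_self _
            · exact absurd htD hc
          · intro ht
            rw [mem_singleton.mp ht]; exact ⟨hb, Or.inr (Or.inl rfl)⟩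
      · by_cases hc : c ∈ D
        · right; right; right; right; right; left
          ext t; rw [hmk]
          constructor
          · rintro ⟨htD, rfl | rfl | rfl⟩
            · exact absurd htD ha
            · exact absurd htD hb
            · exact mem_singleton_self _
          · intro ht
            rw [mem_singleton.mp ht]; exact ⟨hc, Or.inr (Or.inr rfl)⟩
        · exfalso
          obtain ⟨t, ht⟩ := hne'
          rw [hmk] at ht
          rcases ht with ⟨htD, rfl | rfl | rfl⟩
          · exact ha htD
          · exact hb htD
          · exact hc htD
  set P1 := (F.filter (fun D => D ∩ A = ({a} : Finset ℕ))) ∪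
    (F.filter (fun D => D ∩ A = ({b, c} : Finset ℕ))) with hP1
  set P2 := (F.filter (fun D => D ∩ A = ({b} : Finset ℕ))) ∪
    (F.filter (fun D => D ∩ A = ({a, c} : Finset ℕ))) with hP2
  set P3 := (F.filter (fun D => D ∩ A = ({c} : Finset ℕ))) ∪
    (F.filter (fun D => D ∩ A = ({a, b} : Finset ℕ))) with hP3
  have hsub : F ⊆ {A} ∪ (P1 ∪ (P2 ∪ P3)) := by
    intro D hD
    rcases hclass D hD with h | h | h | h | h | h | h <;>
      simp [hP1, hP2, hP3, mem_union, mem_filter, hD, h]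
  have h1 := opp_bound F hF3 hint hM A hAF a b c hab hac hbc hA
  have h2 := opp_bound F hF3 hint hM A hAF b a c (Ne.symm hab) hbc hac
    (by rw [hA]; ext t; simp only [mem_insert, mem_singleton]; tauto)
  have h3 := opp_bound F hF3 hint hM A hAF c a b (Ne.symm hac) (Ne.symm hbc) hab
    (by rw [hA]; ext t; simp only [mem_insert, mem_singleton]; tauto)
  have q := card_le_card hsub
  have q0 := card_union_le ({A} : Finset (Finset ℕ)) (P1 ∪ (P2 ∪ P3))
  have q1 := card_union_le P1 (P2 ∪ P3)
  have q2 := card_union_le P2 P3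
  have r1 := card_union_le (F.filter (fun D => D ∩ A = ({a} : Finset ℕ)))
    (F.filter (fun D => D ∩ A = ({b, c} : Finset ℕ)))
  have r2 := card_union_le (F.filter (fun D => D ∩ A = ({b} : Finset ℕ)))
    (F.filter (fun D => D ∩ A = ({a, c} : Finset ℕ)))
  have r3 := card_union_le (F.filter (fun D => D ∩ A = ({c} : Finset ℕ)))
    (F.filter (fun D => D ∩ A = ({a, b} : Finset ℕ)))
  have hs : ({A} : Finset (Finset ℕ)).card = 1 := card_singleton A
  rw [← hP1] at r1; rw [← hP2] at r2; rw [← hP3] at r3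
  omega

lemma cover_bound (n : ℕ) (hn : 7 ≤ n) (F : Finset (Finset ℕ))
    (hF3 : ∀ D ∈ F, D.card = 3 ∧ D ⊆ Icc 1 n)
    (hint : ∀ D ∈ F, ∀ E ∈ F, ¬ Disjoint D E)
    (hns : ∀ x ∈ Icc 1 n, ∃ D ∈ F, x ∉ D)
    (x y : ℕ) (hxy : x ≠ y) (hx : x ∈ Icc 1 n) (hy : y ∈ Icc 1 n)
    (hcov : ∀ D ∈ F, x ∈ D ∨ y ∈ D) :
    F.card ≤ 3 * n - 8 := by
  set V : Finset ℕ := (Icc 1 n) \ {x, y} with hV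
  have hpair : ({x, y} : Finset ℕ).card = 2 := by
    rw [card_insert_of_notMem (by simp [hxy]), card_singleton]
  have hsubpair : ({x, y} : Finset ℕ) ⊆ Icc 1 n := by
    intro t ht
    rcases mem_insert.mp ht with rfl | h
    · exact hx
    · rw [mem_singleton.mp h]; exact hy
  have hVcard : V.card = n - 2 := by
    rw [hV, card_sdiff_of_subset hsubpair, Nat.card_Icc, hpair]
    omega
  set Sxy := F.filter (fun D => x ∈ D ∧ y ∈ D) with hSxy
  set Sx := F.filter (fun D => x ∈ D ∧ y ∉ D) with hSx
  set Sy := F.filter (fun D => x ∉ D ∧ y ∈ D) with hSy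
  have hSxne : Sx.Nonempty := by
    by_contra hemp
    rw [not_nonempty_iff_eq_empty] at hemp
    have hally : ∀ D ∈ F, y ∈ D := by
      intro D hD
      by_contra hyD
      have hxD : x ∈ D := (hcov D hD).resolve_right hyD
      have : D ∈ Sx := mem_filter.mpr ⟨hD, hxD, hyD⟩
      rw [hemp] at this
      exact notMem_empty D this
    obtain ⟨D, hD, hyD⟩ := hns y hy
    exact hyD (hally D hD)
  have hSyne : Sy.Nonempty := by
    by_contra hemp
    rw [not_nonempty_iff_eq_empty] at hemp
    have hallx : ∀ D ∈ F, x ∈ D := by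
      intro D hD
      by_contra hxD
      have hyD : y ∈ D := (hcov D hD).resolve_left hxD
      have : D ∈ Sy := mem_filter.mpr ⟨hD, hxD, hyD⟩
      rw [hemp] at this
      exact notMem_empty D this
    obtain ⟨D, hD, hxD⟩ := hns x hx
    exact hxD (hallx D hD)
  set EA := Sx.image (fun D => D.erase x) with hEA
  set EB := Sy.image (fun D => D.erase y) with hEB
  have hEAcard : EA.card = Sx.card := by
    rw [hEA]
    apply card_image_of_injOn
    intro D1 h1 D2 h2 heq
    have hx1 : x ∈ D1 := (mem_filter.mp h1).2.1
    have hx2 : x ∈ D2 := (mem_filter.mp h2).2.1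
    rw [← insert_erase hx1, ← insert_erase hx2]
    exact congrArg (insert x) heq
  have hEBcard : EB.card = Sy.card := by
    rw [hEB]
    apply card_image_of_injOn
    intro D1 h1 D2 h2 heq
    have hy1 : y ∈ D1 := (mem_filter.mp h1).2.2
    have hy2 : y ∈ D2 := (mem_filter.mp h2).2.2
    rw [← insert_erase hy1, ← insert_erase hy2]
    exact congrArg (insert y) heq
  have hEAprop : ∀ e ∈ EA, e.card = 2 ∧ e ⊆ V := by
    intro e he
    obtain ⟨D, hD, rfl⟩ := mem_image.mp he
    obtain ⟨hDF, hxD, hyD⟩ := mem_filter.mp hD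
    constructor
    · rw [card_erase_of_mem hxD, (hF3 D hDF).1]
    · intro t ht
      obtain ⟨htx, htD⟩ := mem_erase.mp ht
      refine mem_sdiff.mpr ⟨(hF3 D hDF).2 htD, ?_⟩
      simp only [mem_insert, mem_singleton]
      push_neg
      exact ⟨htx, fun h => hyD (h ▸ htD)⟩
  have hEBprop : ∀ e ∈ EB, e.card = 2 ∧ e ⊆ V := by
    intro e he
    obtain ⟨D, hD, rfl⟩ := mem_image.mp he
    obtain ⟨hDF, hxD, hyD⟩ := mem_filter.mp hD
    constructor
    · rw [card_erase_of_mem hyD, (hF3 D hDF).1]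
    · intro t ht
      obtain ⟨hty, htD⟩ := mem_erase.mp ht
      refine mem_sdiff.mpr ⟨(hF3 D hDF).2 htD, ?_⟩
      simp only [mem_insert, mem_singleton]
      push_neg
      exact ⟨fun h => hxD (h ▸ htD), hty⟩
  have hcross : ∀ e ∈ EA, ∀ f ∈ EB, (e ∩ f).Nonempty := by
    intro e he f hf
    obtain ⟨D, hD, rfl⟩ := mem_image.mp he
    obtain ⟨E, hE, rfl⟩ := mem_image.mp hf
    obtain ⟨hDF, hxD, hyD⟩ := mem_filter.mp hD
    obtain ⟨hEF, hxE, hyE⟩ := mem_filter.mp hE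
    obtain ⟨t, ht⟩ := not_disjoint_iff_nonempty_inter.mp (hint D hDF E hEF)
    obtain ⟨htD, htE⟩ := mem_inter.mp ht
    refine ⟨t, mem_inter.mpr ⟨mem_erase.mpr ⟨fun h => hxE (h ▸ htE), htD⟩,
      mem_erase.mpr ⟨fun h => hyD (h ▸ htD), htE⟩⟩⟩
  have hmain : EA.card + EB.card + 2 ≤ 2 * V.card := by
    refine cross_lemma V EA EB (by omega) ?_ ?_ hEAprop hEBprop hcross
    · obtain ⟨D, hD⟩ := hSxne
      exact ⟨D.erase x, mem_image_of_mem _ hD⟩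
    · obtain ⟨D, hD⟩ := hSyne
      exact ⟨D.erase y, mem_image_of_mem _ hD⟩
  have hSxycard : Sxy.card ≤ V.card := by
    refine card_le_of_covered (T := V) (f := fun t => {x, y, t}) ?_
    intro D hD
    obtain ⟨hDF, hxD, hyD⟩ := mem_filter.mp hD
    obtain ⟨z, hzx, hzy, hDeq⟩ := triple_other (hF3 D hDF).1 hxD hyD hxy
    refine ⟨z, ?_, hDeq⟩
    refine mem_sdiff.mpr ⟨(hF3 D hDF).2 (by rw [hDeq]; simp), ?_⟩
    simp only [mem_insert, mem_singleton]
    push_neg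
    exact ⟨hzx, hzy⟩
  have hFsub : F ⊆ Sxy ∪ Sx ∪ Sy := by
    intro D hD
    by_cases hxD : x ∈ D <;> by_cases hyD : y ∈ D
    · exact mem_union_left _ (mem_union_left _ (mem_filter.mpr ⟨hD, hxD, hyD⟩))
    · exact mem_union_left _ (mem_union_right _ (mem_filter.mpr ⟨hD, hxD, hyD⟩))
    · exact mem_union_right _ (mem_filter.mpr ⟨hD, hxD, hyD⟩)
    · rcases hcov D hD with h | h
      · exact absurd h hxD
      · exact absurd h hyD
  have q := card_le_card hFsub
  have q1 := card_union_le (Sxy ∪ Sx) Sy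
  have q2 := card_union_le Sxy Sx
  omega

open scoped Classical in
theorem color_class_k3_trichotomy {α : Type*} (n : ℕ) (hn : 7 ≤ n)
    (c : Finset ℕ → α) (lam : α) (F : Finset (Finset ℕ))
    (hF : F = (Finset.Icc 1 n).powerset.filter (fun A => A.card = 3 ∧ c A = lam)) :
    (∃ D ∈ F, ∃ E ∈ F, Disjoint D E) ∨
    F.card ≤ 3 * n - 8 ∨
    (∃ x ∈ Finset.Icc 1 n, ∀ A ∈ F, x ∈ A) := by
  have hF3 : ∀ D ∈ F, D.card = 3 ∧ D ⊆ Icc 1 n := by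
    intro D hD
    rw [hF, mem_filter, mem_powerset] at hD
    exact ⟨hD.2.1, hD.1⟩
  by_contra hcon
  push_neg at hcon
  obtain ⟨h1, h2, h3⟩ := hcon
  have hint : ∀ D ∈ F, ∀ E ∈ F, ¬ Disjoint D E := by
    intro D hD E hE hdisj
    exact (h1 D hD E hE) hdisj
  have hns : ∀ x ∈ Icc 1 n, ∃ D ∈ F, x ∉ D := h3
  rcases F.eq_empty_or_nonempty with rfl | hne
  · simp at h2
  have key : F.card ≤ 3 * n - 8 := by
    by_cases hcov : ∃ x y : ℕ, x ≠ y ∧ ∀ D ∈ F, x ∈ D ∨ y ∈ D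
    · obtain ⟨x, y, hxy, hc⟩ := hcov
      have hyI : y ∈ Icc 1 n ∨ (∀ D ∈ F, x ∈ D) := by
        by_cases hyI : y ∈ Icc 1 n
        · exact Or.inl hyI
        · right
          intro D hD
          rcases hc D hD with h | h
          · exact h
          · exact absurd ((hF3 D hD).2 h) hyI
      have hxI : x ∈ Icc 1 n ∨ (∀ D ∈ F, y ∈ D) := by
        by_cases hxI : x ∈ Icc 1 n
        · exact Or.inl hxI
        · right
          intro D hD
          rcases hc D hD with h | h
          · exact absurd ((hF3 D hD).2 h) hxI
          · exact h
      rcases hxI with hxI | hallY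
      · rcases hyI with hyI | hallX
        · exact cover_bound n hn F hF3 hint hns x y hxy hxI hyI hc
        · -- all D contain x
          exfalso
          have hxmem : x ∈ Icc 1 n := by
            obtain ⟨D, hD⟩ := hne
            exact (hF3 D hD).2 (hallX D hD)
          obtain ⟨D, hD, hxD⟩ := hns x hxmem
          exact hxD (hallX D hD)
      · exfalso
        have hymem : y ∈ Icc 1 n := by
          obtain ⟨D, hD⟩ := hne
          exact (hF3 D hD).2 (hallY D hD)
        obtain ⟨D, hD, hyD⟩ := hns y hymem
        exact hyD (hallY D hD)
    · push_neg at hcov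
      have hM : ∀ x y : ℕ, ∃ M ∈ F, x ∉ M ∧ y ∉ M := by
        intro x y
        by_cases hxy : x = y
        · subst hxy
          by_cases hxI : x ∈ Icc 1 n
          · obtain ⟨D, hD, hxD⟩ := hns x hxI
            exact ⟨D, hD, hxD, hxD⟩
          · obtain ⟨D, hD⟩ := hne
            have : x ∉ D := fun h => hxI ((hF3 D hD).2 h)
            exact ⟨D, hD, this, this⟩
        · obtain ⟨D, hD, hprop⟩ := hcov x y hxy
          exact ⟨D, hD, hprop.1, hprop.2⟩
      have := tau3_bound F (fun D hD => (hF3 D hD).1) hint hM hne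
      omega
  omega
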